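/- For all n ≥ 0 and r ≥ 1, the order-lowering recurrence (1/(1-u)) · (h^{(r)}_{n,λ}(x+1|u) - u · h^{(r)}_{n,λ}(x|u)) = h^{(r-1)}_{n,λ}(x|u) holds. -/

import Mathlib

open PowerSeries Finset

noncomputable section

/-- Degenerate falling factorial `(x|λ)_n = x(x-λ)⋯(x-(n-1)λ)`. -/
def degFall {K : Type*} [Ring K] (l x : K) : ℕ → K
  | 0 => 1
  | n + 1 => degFall l x n * (x - (n : K) * l)

/-- The formal power series `(1+λt)^{x/λ} := ∑_{m≥0} (x|λ)_m t^m/m!`. -/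
def binExp {K : Type*} [Field K] (l x : K) : PowerSeries K :=
  PowerSeries.mk fun n => degFall l x n / (n.factorial : K)

/-- Degenerate Frobenius–Euler polynomials `h_{n,λ}(x|u)`, defined by
`(1-u)/((1+λt)^{1/λ} - u) · (1+λt)^{x/λ} = ∑ h_{n,λ}(x|u) tⁿ/n!`. -/
def dFE {K : Type*} [Field K] (l u x : K) (n : ℕ) : K :=
  (n.factorial : K) * PowerSeries.coeff n
    ((PowerSeries.C (1 - u)) * (binExp l 1 - PowerSeries.C u)⁻¹ * binExp l x)

/-- Degenerate Frobenius–Euler polynomials of order `r`. -/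
def dFEr {K : Type*} [Field K] (r : ℕ) (l u x : K) (n : ℕ) : K :=
  (n.factorial : K) * PowerSeries.coeff n
    (((PowerSeries.C (1 - u)) * (binExp l 1 - PowerSeries.C u)⁻¹) ^ r * binExp l x)

/-- The exponential series `e^{xt} = ∑ xⁿ tⁿ/n!`. -/
def expX {K : Type*} [Field K] (x : K) : PowerSeries K :=
  PowerSeries.mk fun n => x ^ n / (n.factorial : K)

/-- Higher-order Frobenius–Euler polynomials `H^{(r)}_n(x|u)`, defined by
`((1-u)/(e^t-u))^r e^{xt} = ∑ H^{(r)}_n(x|u) tⁿ/n!`. -/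
def FEr {K : Type*} [Field K] (r : ℕ) (u x : K) (n : ℕ) : K :=
  (n.factorial : K) * PowerSeries.coeff n
    (((PowerSeries.C (1 - u)) * (expX (1 : K) - PowerSeries.C u)⁻¹) ^ r * expX x)

/-- Signed Stirling numbers of the first kind: `(x)_n = ∑ S₁(n,l) x^l`. -/
def S1 : ℕ → ℕ → ℤ
  | 0, 0 => 1
  | 0, _ + 1 => 0
  | n + 1, 0 => -(n : ℤ) * S1 n 0
  | n + 1, k + 1 => S1 n k - (n : ℤ) * S1 n (k + 1)

/-- Stirling numbers of the second kind: `xⁿ = ∑ S₂(n,l) (x)_l`. -/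
def S2 : ℕ → ℕ → ℤ
  | 0, 0 => 1
  | 0, _ + 1 => 0
  | _ + 1, 0 => 0
  | n + 1, k + 1 => S2 n k + ((k : ℤ) + 1) * S2 n (k + 1)

lemma degFall_add {K : Type*} [CommRing K] (l x y : K) (n : ℕ) :
    degFall l (x + y) n
      = ∑ k ∈ range (n + 1), (n.choose k : K) * degFall l x k * degFall l y (n - k) := by
  induction n with
  | zero => simp [degFall]
  | succ n ih =>
    have step : degFall l (x + y) (n + 1) = degFall l (x + y) n * (x + y - (n : K) * l) := rfl
    rw [step, ih, Finset.sum_mul]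
    have key : ∀ k ∈ range (n + 1),
        (n.choose k : K) * degFall l x k * degFall l y (n - k) * (x + y - (n : K) * l)
        = (n.choose k : K) * (degFall l x (k + 1) * degFall l y (n - k))
          + (n.choose k : K) * (degFall l x k * degFall l y (n - k + 1)) := by
      intro k hk
      have hkn : k ≤ n := Nat.lt_succ_iff.mp (mem_range.mp hk)
      have hcast : ((n - k : ℕ) : K) = (n : K) - (k : K) := by
        push_cast [Nat.cast_sub hkn]; ring
      have h1 : degFall l x (k + 1) = degFall l x k * (x - (k : K) * l) := rfl
      have h2 : degFall l y (n - k + 1) = degFall l y (n - k) * (y - ((n - k : ℕ) : K) * l) := rfl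
      rw [h1, h2, hcast]; ring
    rw [Finset.sum_congr rfl key, Finset.sum_add_distrib]
    -- now handle the two sums
    have S1eq : ∑ k ∈ range (n + 1), (n.choose k : K) * (degFall l x (k + 1) * degFall l y (n - k))
        = ∑ k ∈ range (n + 1), (n.choose k : K) * degFall l x (k + 1) * degFall l y (n - k) := by
      apply Finset.sum_congr rfl; intro k _; ring
    have S2eq : ∑ k ∈ range (n + 1), (n.choose k : K) * (degFall l x k * degFall l y (n - k + 1))
        = ∑ k ∈ range (n + 2), (n.choose k : K) * degFall l x k * degFall l y (n + 1 - k) := by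
      conv_rhs => rw [Finset.sum_range_succ]
      simp only [Nat.choose_succ_self, Nat.cast_zero, zero_mul, mul_zero, zero_mul, add_zero]
      apply Finset.sum_congr rfl; intro k hk
      have hkn : k ≤ n := Nat.lt_succ_iff.mp (mem_range.mp hk)
      rw [Nat.succ_sub hkn]; ring
    rw [S1eq, S2eq]
    -- target sum
    rw [show (n+1)+1 = n+2 from rfl]
    have T : ∑ k ∈ range (n + 2), ((n+1).choose k : K) * degFall l x k * degFall l y (n + 1 - k)
        = (∑ k ∈ range (n + 1), ((n+1).choose (k+1) : K) * degFall l x (k+1) * degFall l y (n - k))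
          + ((n+1).choose 0 : K) * degFall l x 0 * degFall l y (n + 1) := by
      rw [Finset.sum_range_succ']; simp [Nat.succ_sub_succ]
    rw [T]
    have pas : ∀ k ∈ range (n+1),
        ((n+1).choose (k+1) : K) * degFall l x (k+1) * degFall l y (n - k)
        = (n.choose k : K) * degFall l x (k+1) * degFall l y (n - k)
          + (n.choose (k+1) : K) * degFall l x (k+1) * degFall l y (n - k) := by
      intro k _
      rw [Nat.choose_succ_succ]; push_cast; ring
    rw [Finset.sum_congr rfl pas, Finset.sum_add_distrib]
    have S2' : ∑ k ∈ range (n + 2), (n.choose k : K) * degFall l x k * degFall l y (n + 1 - k)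
        = (∑ k ∈ range (n + 1), (n.choose (k+1) : K) * degFall l x (k+1) * degFall l y (n - k))
          + (n.choose 0 : K) * degFall l x 0 * degFall l y (n + 1) := by
      rw [Finset.sum_range_succ']; simp [Nat.succ_sub_succ]
    rw [S2']
    simp only [Nat.choose_zero_right, Nat.cast_one]
    ring

lemma binExp_mul {K : Type*} [Field K] [CharZero K] (l x y : K) :
    binExp l x * binExp l y = binExp l (x + y) := by
  ext n
  rw [PowerSeries.coeff_mul, Finset.Nat.sum_antidiagonal_eq_sum_range_succ_mk]
  simp only [binExp, PowerSeries.coeff_mk]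
  rw [degFall_add, Finset.sum_div]
  apply Finset.sum_congr rfl
  intro k hk
  have hkn : k ≤ n := Nat.lt_succ_iff.mp (mem_range.mp hk)
  have hfac : (n.choose k : K) * (k.factorial : K) * ((n - k).factorial : K) = (n.factorial : K) := by
    rw [← Nat.cast_mul, ← Nat.cast_mul, Nat.choose_mul_factorial_mul_factorial hkn]
  have h1 : (k.factorial : K) ≠ 0 := Nat.cast_ne_zero.mpr k.factorial_ne_zero
  have h2 : ((n - k).factorial : K) ≠ 0 := Nat.cast_ne_zero.mpr (n - k).factorial_ne_zero
  have h3 : (n.factorial : K) ≠ 0 := Nat.cast_ne_zero.mpr n.factorial_ne_zero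
  field_simp
  rw [← hfac]; ring

theorem stmt10 {K : Type*} [Field K] [CharZero K] (l u x : K) (hu : u ≠ 1) (r : ℕ)
    (hr : 1 ≤ r) (n : ℕ) :
    (1 / (1 - u)) * (dFEr r l u (x + 1) n - u * dFEr r l u x n) = dFEr (r - 1) l u x n := by
  obtain ⟨s, rfl⟩ : ∃ s, r = s + 1 := ⟨r - 1, (Nat.succ_pred_eq_of_pos hr).symm⟩
  have h1u : (1 : K) - u ≠ 0 := sub_ne_zero.mpr (Ne.symm hu)
  set B := binExp l 1 - PowerSeries.C u with hB
  set A := PowerSeries.C (1 - u) * B⁻¹ with hA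
  have hc : constantCoeff B ≠ 0 := by
    have : constantCoeff B = 1 - u := by
      simp [hB, binExp, degFall, PowerSeries.constantCoeff_mk]
    rw [this]; exact h1u
  have hinv : B⁻¹ * B = 1 := PowerSeries.inv_mul_cancel B hc
  have hAB : A * B = PowerSeries.C (1 - u) := by
    rw [hA, mul_assoc, hinv, mul_one]
  have key : A ^ (s + 1) * binExp l (x + 1)
      - PowerSeries.C u * (A ^ (s + 1) * binExp l x)
      = PowerSeries.C (1 - u) * (A ^ s * binExp l x) := by
    have hx1 : binExp l (x + 1) = binExp l x * binExp l 1 := (binExp_mul l x 1).symm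
    calc A ^ (s + 1) * binExp l (x + 1) - PowerSeries.C u * (A ^ (s + 1) * binExp l x)
        = A ^ s * (A * B) * binExp l x := by rw [hx1, hB, pow_succ]; ring
      _ = PowerSeries.C (1 - u) * (A ^ s * binExp l x) := by rw [hAB]; ring
  have hco := congrArg (PowerSeries.coeff n) key
  rw [map_sub, PowerSeries.coeff_C_mul, PowerSeries.coeff_C_mul] at hco
  simp only [dFEr, Nat.add_sub_cancel, ← hA, ← hB]
  field_simp
  linear_combination (n.factorial : K) * hco
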